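/- For every t > 0 and y ≥ 0 one has K(t,0,y) = 0 and ∂ₓ K(t,x,y)|_{x=0} = 0. Consequently, for every bounded, continuous, integrable f : ℝ₊ → ℝ, the function u(t,x) = ∫₀^∞ K(t,x,y) f(y) dy satisfies the clamped boundary conditions u(t,0) = 0 and ∂ₓ u(t,0) = 0 for all t > 0. -/

import Mathlib

open MeasureTheory Filter Set

/-- `Φ(r) = e^{-r} + sin r - cos r`. -/
noncomputable def Phi (r : ℝ) : ℝ := Real.exp (-r) + Real.sin r - Real.cos r

/-- The clamped biharmonic heat kernel on the half-line. -/
noncomputable def K (t x y : ℝ) : ℝ :=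
  (1 / Real.pi) * ∫ k in Set.Ioi (0:ℝ), Real.exp (-k ^ 4 * t) * Phi (k * x) * Phi (k * y)

noncomputable def Phi' (r : ℝ) : ℝ := -Real.exp (-r) + Real.cos r + Real.sin r

lemma Phi_zero : Phi 0 = 0 := by simp [Phi]

lemma Phi'_zero : Phi' 0 = 0 := by simp [Phi']

lemma hasDerivAt_Phi (r : ℝ) : HasDerivAt Phi (Phi' r) r := by
  have h1 : HasDerivAt (fun r : ℝ => Real.exp (-r)) (-Real.exp (-r)) r := by
    simpa using ((hasDerivAt_id r).neg.exp)
  exact ((h1.add (Real.hasDerivAt_sin r)).sub (Real.hasDerivAt_cos r)).congr_deriv (by unfold Phi'; ring)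

lemma continuous_Phi : Continuous Phi := by
  unfold Phi; continuity

lemma continuous_Phi' : Continuous Phi' := by
  unfold Phi'; continuity

lemma abs_Phi_le (r : ℝ) : |Phi r| ≤ Real.exp (-r) + 2 := by
  have h1 := Real.neg_one_le_sin r
  have h2 := Real.sin_le_one r
  have h3 := Real.neg_one_le_cos r
  have h4 := Real.cos_le_one r
  have h5 := Real.exp_pos (-r)
  unfold Phi; rw [abs_le]; constructor <;> nlinarith

lemma abs_Phi'_le (r : ℝ) : |Phi' r| ≤ Real.exp (-r) + 2 := by
  have h1 := Real.neg_one_le_sin r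
  have h2 := Real.sin_le_one r
  have h3 := Real.neg_one_le_cos r
  have h4 := Real.cos_le_one r
  have h5 := Real.exp_pos (-r)
  unfold Phi'; rw [abs_le]; constructor <;> nlinarith

lemma abs_Phi_le_of_nonneg {r : ℝ} (hr : 0 ≤ r) : |Phi r| ≤ 3 := by
  have := abs_Phi_le r
  have : Real.exp (-r) ≤ 1 := Real.exp_le_one_iff.mpr (by linarith)
  have := abs_Phi_le r
  have h1 : Real.exp (-r) ≤ 1 := Real.exp_le_one_iff.mpr (by linarith)
  linarith [abs_Phi_le r]

/-- The dominating bound. -/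
noncomputable def B (t k : ℝ) : ℝ := 3 * (k + 1) * (Real.exp (2 * k) + 2) * Real.exp (-k ^ 4 * t)

lemma B_nonneg (t k : ℝ) (hk : 0 ≤ k) : 0 ≤ B t k := by
  have := Real.exp_pos (2 * k)
  have := Real.exp_pos (-k ^ 4 * t)
  unfold B; positivity

lemma B_integrable {t : ℝ} (ht : 0 < t) : IntegrableOn (B t) (Set.Ioi 0) := by
  apply integrable_of_isBigO_exp_neg (a := 0) (b := 1) one_pos
  · apply Continuous.continuousOn; unfold B; continuity
  · rw [Asymptotics.isBigO_iff]
    refine ⟨1, ?_⟩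
    have h9 : (9 : ℝ) ≤ Real.exp 3 := by
      have h1 := Real.exp_one_gt_d9
      have h2 : Real.exp 3 = Real.exp 1 * Real.exp 1 * Real.exp 1 := by
        rw [← Real.exp_add, ← Real.exp_add]; norm_num
      nlinarith [Real.exp_pos 1]
    filter_upwards [eventually_ge_atTop (1 : ℝ), eventually_ge_atTop (7 / t)] with k hk1 hkt
    have hk0 : (0:ℝ) ≤ k := by linarith
    have htk : 7 ≤ t * k := by
      rw [div_le_iff₀ ht] at hkt; nlinarith
    have hpoly : 4 * k + 3 ≤ k ^ 4 * t := by
      have h1 : k ≤ k ^ 3 := by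
        nlinarith [mul_nonneg (mul_nonneg hk0 (sub_nonneg.mpr hk1))
          (by linarith : (0:ℝ) ≤ k + 1)]
      have h2 : 7 * k ^ 3 ≤ k ^ 4 * t := by nlinarith
      nlinarith
    have hb1 : B t k ≤ 9 * Real.exp (3 * k - k ^ 4 * t) := by
      have e1 : k + 1 ≤ Real.exp k := Real.add_one_le_exp k
      have e2 : Real.exp (2 * k) + 2 ≤ 3 * Real.exp (2 * k) := by
        nlinarith [Real.one_le_exp hk0, Real.one_le_exp (by linarith : (0:ℝ) ≤ 2 * k)]
      have hexp := Real.exp_pos (-k ^ 4 * t)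
      have hexp2 := Real.exp_pos (2 * k)
      have hexpk := Real.exp_pos k
      unfold B
      calc 3 * (k + 1) * (Real.exp (2 * k) + 2) * Real.exp (-k ^ 4 * t)
          ≤ 3 * Real.exp k * (3 * Real.exp (2 * k)) * Real.exp (-k ^ 4 * t) := by
            apply mul_le_mul_of_nonneg_right _ hexp.le
            apply mul_le_mul (by nlinarith) e2 (by positivity) (by positivity)
        _ = 9 * Real.exp (3 * k - k ^ 4 * t) := by
            rw [show (3:ℝ) * k - k ^ 4 * t = k + 2 * k + -k ^ 4 * t by ring,
              Real.exp_add, Real.exp_add]; ring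
    have hb2 : 9 * Real.exp (3 * k - k ^ 4 * t) ≤ Real.exp (-k) := by
      have : 9 * Real.exp (3 * k - k ^ 4 * t) ≤ Real.exp 3 * Real.exp (3 * k - k ^ 4 * t) :=
        mul_le_mul_of_nonneg_right h9 (Real.exp_pos _).le
      refine this.trans ?_
      rw [← Real.exp_add]
      apply Real.exp_le_exp.mpr
      linarith
    have hBnn := B_nonneg t k hk0
    rw [Real.norm_eq_abs, Real.norm_eq_abs, abs_of_nonneg hBnn,
      abs_of_nonneg (Real.exp_pos _).le, one_mul, neg_one_mul]
    linarith

/-- Inner derivative of the kernel (without the 1/π factor). -/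
noncomputable def D (t x y : ℝ) : ℝ :=
  ∫ k in Set.Ioi (0:ℝ), Real.exp (-k ^ 4 * t) * (k * Phi' (k * x)) * Phi (k * y)

lemma D_zero (t y : ℝ) : D t 0 y = 0 := by
  unfold D
  simp [Phi'_zero]

lemma key {t x y : ℝ} (ht : 0 < t) (hy : 0 ≤ y) (hx : |x| < 1) :
    HasDerivAt (fun x => K t x y) ((1 / Real.pi) * D t x y) x ∧
      |D t x y| ≤ ∫ k in Set.Ioi (0:ℝ), B t k := by
  have hBint := B_integrable ht
  have hbound : ∀ᵐ k ∂(volume.restrict (Set.Ioi (0:ℝ))), ∀ x' ∈ Metric.ball x 1,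
      ‖Real.exp (-k ^ 4 * t) * (k * Phi' (k * x')) * Phi (k * y)‖ ≤ B t k := by
    filter_upwards [ae_restrict_mem measurableSet_Ioi] with k hk
    intro x' hx'
    have hk0 : 0 < k := hk
    have hx'2 : |x'| < 2 := by
      have := mem_ball_iff_norm.mp hx'
      rw [Real.norm_eq_abs] at this
      calc |x'| = |x' - x + x| := by rw [sub_add_cancel]
        _ ≤ |x' - x| + |x| := abs_add_le _ _
        _ < 2 := by linarith
    have h1 : |Phi' (k * x')| ≤ Real.exp (2 * k) + 2 := by
      refine (abs_Phi'_le _).trans ?_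
      have : -(k * x') ≤ 2 * k := by
        have h := (abs_lt.mp hx'2).1
        nlinarith
      have := Real.exp_le_exp.mpr this
      linarith
    have h2 : |Phi (k * y)| ≤ 3 := abs_Phi_le_of_nonneg (by positivity)
    rw [Real.norm_eq_abs, abs_mul, abs_mul, abs_mul,
      abs_of_nonneg (Real.exp_pos _).le, abs_of_nonneg hk0.le]
    unfold B
    calc Real.exp (-k ^ 4 * t) * (k * |Phi' (k * x')|) * |Phi (k * y)|
        ≤ Real.exp (-k ^ 4 * t) * (k * (Real.exp (2 * k) + 2)) * 3 := by
          apply mul_le_mul _ h2 (abs_nonneg _) (by positivity)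
          apply mul_le_mul_of_nonneg_left _ (Real.exp_pos _).le
          exact mul_le_mul_of_nonneg_left h1 hk0.le
      _ ≤ 3 * (k + 1) * (Real.exp (2 * k) + 2) * Real.exp (-k ^ 4 * t) := by
          have := Real.exp_pos (-k ^ 4 * t)
          have := Real.exp_pos (2 * k)
          nlinarith
  have hmeas : ∀ x' : ℝ, AEStronglyMeasurable
      (fun k => Real.exp (-k ^ 4 * t) * Phi (k * x') * Phi (k * y))
      (volume.restrict (Set.Ioi (0:ℝ))) := by
    intro x'
    apply Continuous.aestronglyMeasurable
    exact ((Real.continuous_exp.comp (by fun_prop)).mul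
      (continuous_Phi.comp (by fun_prop))).mul (continuous_Phi.comp (by fun_prop))
  have hdiff : ∀ᵐ k ∂(volume.restrict (Set.Ioi (0:ℝ))), ∀ x' ∈ Metric.ball x 1,
      HasDerivAt (fun x' => Real.exp (-k ^ 4 * t) * Phi (k * x') * Phi (k * y))
        (Real.exp (-k ^ 4 * t) * (k * Phi' (k * x')) * Phi (k * y)) x' := by
    refine Filter.Eventually.of_forall fun k => fun x' _ => ?_
    have h1 : HasDerivAt (fun x' => Phi (k * x')) (k * Phi' (k * x')) x' := by
      have := (hasDerivAt_Phi (k * x')).comp x' ((hasDerivAt_id x').const_mul k)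
      exact this.congr_deriv (by ring)
    exact ((h1.const_mul (Real.exp (-k ^ 4 * t))).mul_const (Phi (k * y)))
  have hint : Integrable (fun k => Real.exp (-k ^ 4 * t) * Phi (k * x) * Phi (k * y))
      (volume.restrict (Set.Ioi (0:ℝ))) := by
    apply Integrable.mono' hBint (hmeas x)
    filter_upwards [ae_restrict_mem measurableSet_Ioi] with k hk
    have hk0 : 0 < k := hk
    have h1 : |Phi (k * x)| ≤ Real.exp (2 * k) + 2 := by
      refine (abs_Phi_le _).trans ?_
      have : -(k * x) ≤ 2 * k := by
        have := (abs_lt.mp hx).1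
        nlinarith
      have := Real.exp_le_exp.mpr this
      linarith
    have h2 : |Phi (k * y)| ≤ 3 := abs_Phi_le_of_nonneg (by positivity)
    rw [Real.norm_eq_abs, abs_mul, abs_mul, abs_of_nonneg (Real.exp_pos _).le]
    unfold B
    have he := Real.exp_pos (-k ^ 4 * t)
    have he2 := Real.exp_pos (2 * k)
    have hPx := abs_nonneg (Phi (k * x))
    have hPy := abs_nonneg (Phi (k * y))
    have step1 : Real.exp (-k ^ 4 * t) * |Phi (k * x)| * |Phi (k * y)|
        ≤ Real.exp (-k ^ 4 * t) * (Real.exp (2 * k) + 2) * 3 := by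
      apply mul_le_mul (mul_le_mul_of_nonneg_left h1 he.le) h2 hPy (by positivity)
    nlinarith [step1, mul_nonneg (mul_nonneg hk0.le
      (by positivity : (0:ℝ) ≤ Real.exp (2 * k) + 2)) he.le]
  have hF'meas : AEStronglyMeasurable
      (fun k => Real.exp (-k ^ 4 * t) * (k * Phi' (k * x)) * Phi (k * y))
      (volume.restrict (Set.Ioi (0:ℝ))) := by
    apply Continuous.aestronglyMeasurable
    exact ((Real.continuous_exp.comp (by fun_prop)).mul
      ((continuous_id.mul (continuous_Phi'.comp (by fun_prop))))).mul
      (continuous_Phi.comp (by fun_prop))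
  have main := hasDerivAt_integral_of_dominated_loc_of_deriv_le
    (F := fun x' k => Real.exp (-k ^ 4 * t) * Phi (k * x') * Phi (k * y))
    (F' := fun x' k => Real.exp (-k ^ 4 * t) * (k * Phi' (k * x')) * Phi (k * y))
    (bound := B t) (μ := volume.restrict (Set.Ioi (0:ℝ))) (x₀ := x)
    (Metric.ball_mem_nhds x one_pos) (Filter.Eventually.of_forall hmeas) hint hF'meas hbound hBint hdiff
  constructor
  · exact (main.2.const_mul (1 / Real.pi))
  · exact norm_integral_le_of_norm_le hBint (hbound.mono fun k hk =>
      hk x (Metric.mem_ball_self one_pos))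

lemma K_zero (t y : ℝ) : K t 0 y = 0 := by
  unfold K
  simp [Phi_zero]

lemma K_deriv_zero {t y : ℝ} (ht : 0 < t) (hy : 0 ≤ y) :
    deriv (fun x => K t x y) 0 = 0 := by
  have h := (key ht hy (by norm_num : |(0:ℝ)| < 1)).1
  rw [D_zero, mul_zero] at h
  exact h.deriv

lemma K_meas (t x : ℝ) : StronglyMeasurable (fun y => K t x y) := by
  have hc : Continuous (fun p : ℝ × ℝ =>
      Real.exp (-p.2 ^ 4 * t) * Phi (p.2 * x) * Phi (p.2 * p.1)) := by
    apply Continuous.mul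
    apply Continuous.mul
    · exact Real.continuous_exp.comp (by continuity)
    · exact continuous_Phi.comp (by continuity)
    · exact continuous_Phi.comp (by continuity)
  have h := (hc.stronglyMeasurable.integral_prod_right'
    (ν := volume.restrict (Set.Ioi (0:ℝ))))
  exact (h.const_mul (1 / Real.pi))

/-- the kernel satisfies the clamped boundary conditions at `x = 0`, and hence
so does `u(t,x) = ∫₀^∞ K(t,x,y) f(y) dy` for bounded continuous integrable `f`. -/
theorem stmt1 :
    (∀ t > (0:ℝ), ∀ y ≥ (0:ℝ), K t 0 y = 0 ∧ deriv (fun x => K t x y) 0 = 0) ∧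
    (∀ f : ℝ → ℝ, ContinuousOn f (Set.Ici 0) → (∃ M, ∀ x ≥ (0:ℝ), |f x| ≤ M) →
      IntegrableOn f (Set.Ioi 0) →
      ∀ t > (0:ℝ),
        (∫ y in Set.Ioi (0:ℝ), K t 0 y * f y) = 0 ∧
        deriv (fun x => ∫ y in Set.Ioi (0:ℝ), K t x y * f y) 0 = 0) := by
  constructor
  · intro t ht y hy
    exact ⟨K_zero t y, K_deriv_zero ht hy⟩
  · intro f hcont hbd hfint t ht
    refine ⟨by simp [K_zero], ?_⟩
    set C : ℝ := (1 / Real.pi) * ∫ k in Set.Ioi (0:ℝ), B t k with hC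
    have hπ : (0:ℝ) < 1 / Real.pi := by positivity
    have hKmeas : ∀ x : ℝ, AEStronglyMeasurable (fun y => K t x y * f y)
        (volume.restrict (Set.Ioi (0:ℝ))) :=
      fun x => ((K_meas t x).aestronglyMeasurable).mul hfint.aestronglyMeasurable
    have hFint : Integrable (fun y => K t 0 y * f y) (volume.restrict (Set.Ioi (0:ℝ))) := by
      have : (fun y => K t 0 y * f y) = fun _ => (0:ℝ) := by
        funext y; simp [K_zero]
      rw [this]; exact integrable_zero _ _ _
    have hF'meas : AEStronglyMeasurable (fun y => (1 / Real.pi) * D t 0 y * f y)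
        (volume.restrict (Set.Ioi (0:ℝ))) := by
      have : (fun y => (1 / Real.pi) * D t 0 y * f y) = fun _ => (0:ℝ) := by
        funext y; simp [D_zero]
      rw [this]; exact aestronglyMeasurable_const
    have hbound : ∀ᵐ y ∂(volume.restrict (Set.Ioi (0:ℝ))), ∀ x ∈ Metric.ball (0:ℝ) 1,
        ‖(1 / Real.pi) * D t x y * f y‖ ≤ C * |f y| := by
      filter_upwards [ae_restrict_mem measurableSet_Ioi] with y hy
      intro x hx
      have hy0 : (0:ℝ) ≤ y := le_of_lt hy
      have hx1 : |x| < 1 := by simpa [Real.norm_eq_abs] using mem_ball_iff_norm.mp hx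
      have hk := (key ht hy0 hx1).2
      rw [Real.norm_eq_abs, abs_mul, abs_mul, abs_of_nonneg hπ.le, hC]
      have h0 : (0:ℝ) ≤ |f y| := abs_nonneg _
      calc 1 / Real.pi * |D t x y| * |f y|
          ≤ 1 / Real.pi * (∫ k in Set.Ioi (0:ℝ), B t k) * |f y| := by
            apply mul_le_mul_of_nonneg_right _ h0
            exact mul_le_mul_of_nonneg_left hk hπ.le
        _ = (1 / Real.pi * ∫ k in Set.Ioi (0:ℝ), B t k) * |f y| := by ring
    have hbint : Integrable (fun y => C * |f y|) (volume.restrict (Set.Ioi (0:ℝ))) :=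
      (hfint.abs).const_mul C
    have hdiff : ∀ᵐ y ∂(volume.restrict (Set.Ioi (0:ℝ))), ∀ x ∈ Metric.ball (0:ℝ) 1,
        HasDerivAt (fun x => K t x y * f y) ((1 / Real.pi) * D t x y * f y) x := by
      filter_upwards [ae_restrict_mem measurableSet_Ioi] with y hy
      intro x hx
      have hy0 : (0:ℝ) ≤ y := le_of_lt hy
      have hx1 : |x| < 1 := by simpa [Real.norm_eq_abs] using mem_ball_iff_norm.mp hx
      exact ((key ht hy0 hx1).1).mul_const (f y)
    have main := hasDerivAt_integral_of_dominated_loc_of_deriv_le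
      (F := fun x y => K t x y * f y)
      (F' := fun x y => (1 / Real.pi) * D t x y * f y)
      (bound := fun y => C * |f y|) (μ := volume.restrict (Set.Ioi (0:ℝ))) (x₀ := (0:ℝ))
      (Metric.ball_mem_nhds (0:ℝ) one_pos) (Filter.Eventually.of_forall hKmeas) hFint hF'meas hbound hbint hdiff
    have h0 : (∫ y in Set.Ioi (0:ℝ), (1 / Real.pi) * D t 0 y * f y) = 0 := by
      simp [D_zero]
    have hd := main.2.deriv
    simpa [D_zero] using hd
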